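/- Let n ≥ 1, let 0 < τ₁ < τ₂ be temperatures with τ_δ = 1/τ₁ − 1/τ₂, let L ∈ ℝ^{n×n} be a symmetric matrix, let c ≥ 0, and let U : ℝⁿ → ℝ be continuously differentiable with exp(−U(x)/τ₁ − U(y)/τ₂) Lebesgue integrable over ℝⁿ × ℝⁿ. Then for every twice continuously differentiable compactly supported f : ℝⁿ × ℝⁿ → ℝ, the density π is infinitesimally invariant for the generator: ∫∫ (𝓛ᶜf)(x,y) π(x,y) dx dy = 0. -/

import Mathlib

open MeasureTheory Matrix

/-- The swap function `s(x,y) = min{1, exp(τ_δ (U(x) − U(y)))}` with `τ_δ = 1/τ₁ − 1/τ₂`. -/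
noncomputable def swapS {n : ℕ} (τ₁ τ₂ : ℝ) (U : (Fin n → ℝ) → ℝ) (x y : Fin n → ℝ) : ℝ :=
  min 1 (Real.exp ((1 / τ₁ - 1 / τ₂) * (U x - U y)))

/-- The joint density `π(x,y) = exp(−U(x)/τ₁ − U(y)/τ₂)`. -/
noncomputable def jointDensity {n : ℕ} (τ₁ τ₂ : ℝ) (U : (Fin n → ℝ) → ℝ)
    (x y : Fin n → ℝ) : ℝ :=
  Real.exp (-(U x) / τ₁ - U y / τ₂)

/-- The gradient vector of `h : ℝⁿ → ℝ` at `x`, with components `∂h/∂x_i(x)`. -/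
noncomputable def gradVec {n : ℕ} (h : (Fin n → ℝ) → ℝ) (x : Fin n → ℝ) : Fin n → ℝ :=
  fun i => fderiv ℝ h x (Pi.single i 1)

/-- The generator `𝓛ᶜ` of the replica exchange preconditioned Langevin jump process. -/
noncomputable def repGen {n : ℕ} (L : Matrix (Fin n) (Fin n) ℝ) (τ₁ τ₂ c : ℝ)
    (U : (Fin n → ℝ) → ℝ) (f : (Fin n → ℝ) → (Fin n → ℝ) → ℝ) (x y : Fin n → ℝ) : ℝ :=
  -((L.mulVec (gradVec U x)) ⬝ᵥ (gradVec (fun x' => f x' y) x))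
    + τ₁ * ∑ i, ∑ j, L i j *
        gradVec (fun x' => gradVec (fun x'' => f x'' y) x' j) x i
    - (L.mulVec (gradVec U y)) ⬝ᵥ (gradVec (f x) y)
    + τ₂ * ∑ i, ∑ j, L i j *
        gradVec (fun y' => gradVec (f x) y' j) y i
    + c * swapS τ₁ τ₂ U x y * (f y x - f x y)

section helpers

variable {n : ℕ}

private lemma integral_fderiv_eval_zero {g : (Fin n → ℝ) → ℝ} (hg : Differentiable ℝ g)
    (hgi : Integrable g (volume : Measure (Fin n → ℝ))) (v : Fin n → ℝ)
    (hgd : Integrable (fun x => fderiv ℝ g x v) (volume : Measure (Fin n → ℝ))) :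
    ∫ x : Fin n → ℝ, fderiv ℝ g x v = 0 := by
  have h := integral_mul_fderiv_eq_neg_fderiv_mul_of_integrable
      (μ := (volume : Measure (Fin n → ℝ))) (f := fun _ => (1:ℝ)) (g := g) (v := v)
      (by simpa using (integrable_zero _ ℝ (volume : Measure (Fin n → ℝ))))
      (by simpa using hgd) (by simpa using hgi) (fun x _ => differentiableAt_const _) (fun x _ => hg x)
  simpa using h

private lemma langevin_part (τ C : ℝ) (hτ : 0 < τ)
    (L : Matrix (Fin n) (Fin n) ℝ) (hL : L.IsSymm)
    (U : (Fin n → ℝ) → ℝ) (hU : ContDiff ℝ 1 U)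
    (φ : (Fin n → ℝ) → ℝ) (hφ : ContDiff ℝ 2 φ) (hφc : HasCompactSupport φ) :
    ∫ z : Fin n → ℝ, (-(L.mulVec (gradVec U z) ⬝ᵥ gradVec φ z)
      + τ * ∑ i, ∑ j, L i j * gradVec (fun z' => gradVec φ z' j) z i)
      * (Real.exp (-U z / τ) * C) = 0 := by
  have hτ' : τ ≠ 0 := ne_of_gt hτ
  set ρ : (Fin n → ℝ) → ℝ := fun z => Real.exp (-U z / τ) with hρdef
  have hUd : Differentiable ℝ U := hU.differentiable one_ne_zero
  have hρc : ContDiff ℝ 1 ρ := Real.contDiff_exp.comp ((hU.neg).div_const τ)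
  have hval : ∀ w : Fin n → ℝ, (-τ⁻¹) * U w = -U w / τ := fun w => by ring
  have hρder : ∀ z, HasFDerivAt ρ (ρ z • ((-τ⁻¹) • fderiv ℝ U z)) z := by
    intro z
    have h2 : HasFDerivAt (fun w => Real.exp ((-τ⁻¹) * U w))
        (Real.exp ((-τ⁻¹) * U z) • ((-τ⁻¹) • fderiv ℝ U z)) z :=
      (((hUd z).hasFDerivAt).const_mul _).exp
    simpa [hρdef, hval] using h2
  have haC : ∀ j, ContDiff ℝ 1 (fun z => fderiv ℝ φ z (Pi.single j 1)) := fun j =>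
    (hφ.fderiv_right (m := 1) (by norm_num)).clm_apply contDiff_const
  have haS : ∀ j : Fin n, HasCompactSupport (fun z => fderiv ℝ φ z (Pi.single j 1)) := fun j =>
    hφc.fderiv_apply ℝ (Pi.single j 1)
  set g : Fin n → (Fin n → ℝ) → ℝ := fun j z => fderiv ℝ φ z (Pi.single j 1) * ρ z with hgdef
  have hgC : ∀ j, ContDiff ℝ 1 (g j) := fun j => (haC j).mul hρc
  have hgS : ∀ j, HasCompactSupport (g j) := fun j => (haS j).mul_right
  have hgder : ∀ j z, HasFDerivAt (g j)
      (fderiv ℝ φ z (Pi.single j 1) • (ρ z • ((-τ⁻¹) • fderiv ℝ U z))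
        + ρ z • fderiv ℝ (fun w => fderiv ℝ φ w (Pi.single j 1)) z) z := fun j z =>
    (((haC j).differentiable one_ne_zero z).hasFDerivAt).mul (hρder z)
  have hfd : ∀ j z i, fderiv ℝ (g j) z (Pi.single i 1)
      = fderiv ℝ φ z (Pi.single j 1) * (ρ z * (-τ⁻¹ * fderiv ℝ U z (Pi.single i 1)))
        + ρ z * fderiv ℝ (fun w => fderiv ℝ φ w (Pi.single j 1)) z (Pi.single i 1) := by
    intro j z i
    rw [(hgder j z).fderiv]
    simp [smul_eq_mul, mul_assoc]
  have hpoint : ∀ z, (-(L.mulVec (gradVec U z) ⬝ᵥ gradVec φ z)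
      + τ * ∑ i, ∑ j, L i j * gradVec (fun z' => gradVec φ z' j) z i) * (ρ z * C)
      = ∑ i, ∑ j, (τ * C * L i j) * fderiv ℝ (g j) z (Pi.single i 1) := by
    intro z
    simp only [gradVec, hfd, Matrix.mulVec, dotProduct]
    rw [add_mul, neg_mul]
    rw [show (∑ j, (∑ i, L j i * fderiv ℝ U z (Pi.single i 1)) * fderiv ℝ φ z (Pi.single j 1))
          * (ρ z * C)
        = ∑ i, ∑ j, L i j * fderiv ℝ U z (Pi.single i 1) * fderiv ℝ φ z (Pi.single j 1)
          * (ρ z * C) by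
      simp only [Finset.sum_mul]
      rw [Finset.sum_comm]
      exact Finset.sum_congr rfl fun i _ => Finset.sum_congr rfl fun j _ => by rw [hL.apply]]
    rw [show (τ * ∑ i, ∑ j, L i j
          * fderiv ℝ (fun z' => fderiv ℝ φ z' (Pi.single j 1)) z (Pi.single i 1)) * (ρ z * C)
        = ∑ i, ∑ j, τ * (L i j
          * fderiv ℝ (fun z' => fderiv ℝ φ z' (Pi.single j 1)) z (Pi.single i 1)) * (ρ z * C) by
      simp only [Finset.mul_sum, Finset.sum_mul]]
    rw [← Finset.sum_neg_distrib, ← Finset.sum_add_distrib]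
    refine Finset.sum_congr rfl fun i _ => ?_
    rw [← Finset.sum_neg_distrib, ← Finset.sum_add_distrib]
    refine Finset.sum_congr rfl fun j _ => ?_
    field_simp
  have hterm_int : ∀ (i j : Fin n), Integrable
      (fun z => (τ * C * L i j) * fderiv ℝ (g j) z (Pi.single i 1))
      (volume : Measure (Fin n → ℝ)) := by
    intro i j
    refine Integrable.const_mul ?_ _
    refine Continuous.integrable_of_hasCompactSupport ?_ ?_
    · exact ((hgC j).continuous_fderiv one_ne_zero).clm_apply continuous_const
    · exact (hgS j).fderiv_apply ℝ (Pi.single i 1)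
  calc ∫ z : Fin n → ℝ, (-(L.mulVec (gradVec U z) ⬝ᵥ gradVec φ z)
      + τ * ∑ i, ∑ j, L i j * gradVec (fun z' => gradVec φ z' j) z i)
      * (ρ z * C)
      = ∫ z : Fin n → ℝ, ∑ i, ∑ j, (τ * C * L i j) * fderiv ℝ (g j) z (Pi.single i 1) := by
        congr 1; funext z; exact hpoint z
    _ = ∑ i, ∑ j, ∫ z : Fin n → ℝ, (τ * C * L i j) * fderiv ℝ (g j) z (Pi.single i 1) := by
        rw [integral_finset_sum _ (fun i _ => integrable_finset_sum _ (fun j _ => hterm_int i j))]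
        exact Finset.sum_congr rfl fun i _ => integral_finset_sum _ (fun j _ => hterm_int i j)
    _ = 0 := by
        refine Finset.sum_eq_zero fun i _ => Finset.sum_eq_zero fun j _ => ?_
        rw [integral_const_mul, integral_fderiv_eval_zero ((hgC j).differentiable one_ne_zero)
          (((hgC j).continuous).integrable_of_hasCompactSupport (hgS j)) _
          (Continuous.integrable_of_hasCompactSupport
            (((hgC j).continuous_fderiv one_ne_zero).clm_apply continuous_const)
            ((hgS j).fderiv_apply ℝ (Pi.single i 1))), mul_zero]

end helpers

/-- Infinitesimal invariance of the density `π` for the replica exchange generator: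
`∫∫ (𝓛ᶜ f)(x,y) π(x,y) dx dy = 0` for all `C²` compactly supported `f`. -/
theorem repGen_invariance (n : ℕ) (hn : 1 ≤ n)
    (τ₁ τ₂ : ℝ) (hτ₁ : 0 < τ₁) (hτ₁₂ : τ₁ < τ₂)
    (L : Matrix (Fin n) (Fin n) ℝ) (hL : L.IsSymm)
    (c : ℝ) (hc : 0 ≤ c)
    (U : (Fin n → ℝ) → ℝ) (hU : ContDiff ℝ 1 U)
    (hπ : Integrable (fun p : (Fin n → ℝ) × (Fin n → ℝ) => jointDensity τ₁ τ₂ U p.1 p.2))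
    (f : (Fin n → ℝ) → (Fin n → ℝ) → ℝ)
    (hf : ContDiff ℝ 2 (Function.uncurry f)) (hfc : HasCompactSupport (Function.uncurry f)) :
    ∫ x : Fin n → ℝ, ∫ y : Fin n → ℝ,
        repGen L τ₁ τ₂ c U f x y * jointDensity τ₁ τ₂ U x y = 0 := by
  classical
  have hτ₂ : 0 < τ₂ := hτ₁.trans hτ₁₂
  set F : ((Fin n → ℝ) × (Fin n → ℝ)) → ℝ := Function.uncurry f with hFdef
  have hF2 : ContDiff ℝ 2 F := hf
  have hFs : HasCompactSupport F := hfc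
  have hFd1 : ContDiff ℝ 1 (fderiv ℝ F) := hF2.fderiv_right (m := 1) (by norm_num)
  set G : Fin n → ((Fin n → ℝ) × (Fin n → ℝ)) → ℝ :=
    fun j p => fderiv ℝ F p (Pi.single j 1, 0) with hGdef
  set Gr : Fin n → ((Fin n → ℝ) × (Fin n → ℝ)) → ℝ :=
    fun j p => fderiv ℝ F p (0, Pi.single j 1) with hGrdef
  have hGc : ∀ j, ContDiff ℝ 1 (G j) := fun j => hFd1.clm_apply contDiff_const
  have hGrc : ∀ j, ContDiff ℝ 1 (Gr j) := fun j => hFd1.clm_apply contDiff_const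
  have hGs : ∀ j, HasCompactSupport (G j) := fun j =>
    (hFs.fderiv ℝ).comp_left
      (g := fun M : ((Fin n → ℝ) × (Fin n → ℝ)) →L[ℝ] ℝ => M (Pi.single j 1, 0)) rfl
  have hGrs : ∀ j, HasCompactSupport (Gr j) := fun j =>
    (hFs.fderiv ℝ).comp_left
      (g := fun M : ((Fin n → ℝ) × (Fin n → ℝ)) →L[ℝ] ℝ => M (0, Pi.single j 1)) rfl
  have hmkl : ∀ (y x : Fin n → ℝ), HasFDerivAt (fun x' : Fin n → ℝ => (x', y))
      ((ContinuousLinearMap.id ℝ (Fin n → ℝ)).prod 0) x :=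
    fun y x => (hasFDerivAt_id x).prodMk (hasFDerivAt_const y x)
  have hmkr : ∀ (x y : Fin n → ℝ), HasFDerivAt (fun y' : Fin n → ℝ => (x, y'))
      ((0 : (Fin n → ℝ) →L[ℝ] (Fin n → ℝ)).prod (ContinuousLinearMap.id ℝ (Fin n → ℝ))) y :=
    fun x y => (hasFDerivAt_const x y).prodMk (hasFDerivAt_id y)
  have hFdiff : Differentiable ℝ F := hF2.differentiable (by norm_num)
  have hslice1 : ∀ (x y : Fin n → ℝ) (j : Fin n),
      fderiv ℝ (fun x' => f x' y) x (Pi.single j 1) = G j (x, y) := by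
    intro x y j
    have h : HasFDerivAt (fun x' => f x' y)
        ((fderiv ℝ F (x, y)).comp ((ContinuousLinearMap.id ℝ (Fin n → ℝ)).prod 0)) x :=
      by have := (hFdiff (x, y)).hasFDerivAt.comp x (hmkl y x); exact this
    rw [h.fderiv]
    simp [hGdef]
  have hslice2 : ∀ (x y : Fin n → ℝ) (j : Fin n),
      fderiv ℝ (f x) y (Pi.single j 1) = Gr j (x, y) := by
    intro x y j
    have h : HasFDerivAt (f x)
        ((fderiv ℝ F (x, y)).comp
          ((0 : (Fin n → ℝ) →L[ℝ] (Fin n → ℝ)).prod (ContinuousLinearMap.id ℝ (Fin n → ℝ)))) y :=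
      (hFdiff (x, y)).hasFDerivAt.comp y (hmkr x y)
    rw [h.fderiv]
    simp [hGrdef]
  have hslice1' : ∀ (x y : Fin n → ℝ) (i j : Fin n),
      fderiv ℝ (fun x' => fderiv ℝ (fun x'' => f x'' y) x' (Pi.single j 1)) x (Pi.single i 1)
        = fderiv ℝ (G j) (x, y) (Pi.single i 1, 0) := by
    intro x y i j
    have heq : (fun x' => fderiv ℝ (fun x'' => f x'' y) x' (Pi.single j 1))
        = fun x' => G j (x', y) := funext fun x' => hslice1 x' y j
    rw [heq]
    have h : HasFDerivAt (fun x' => G j (x', y))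
        ((fderiv ℝ (G j) (x, y)).comp ((ContinuousLinearMap.id ℝ (Fin n → ℝ)).prod 0)) x :=
      by have := (((hGc j).differentiable one_ne_zero) (x, y)).hasFDerivAt.comp x (hmkl y x); exact this
    rw [h.fderiv]
    simp
  have hslice2' : ∀ (x y : Fin n → ℝ) (i j : Fin n),
      fderiv ℝ (fun y' => fderiv ℝ (f x) y' (Pi.single j 1)) y (Pi.single i 1)
        = fderiv ℝ (Gr j) (x, y) (0, Pi.single i 1) := by
    intro x y i j
    have heq : (fun y' => fderiv ℝ (f x) y' (Pi.single j 1))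
        = fun y' => Gr j (x, y') := funext fun y' => hslice2 x y' j
    rw [heq]
    have h : HasFDerivAt (fun y' => Gr j (x, y'))
        ((fderiv ℝ (Gr j) (x, y)).comp
          ((0 : (Fin n → ℝ) →L[ℝ] (Fin n → ℝ)).prod (ContinuousLinearMap.id ℝ (Fin n → ℝ)))) y :=
      (((hGrc j).differentiable one_ne_zero) (x, y)).hasFDerivAt.comp y (hmkr x y)
    rw [h.fderiv]
    simp
  have hv1' : ∀ (x y : Fin n → ℝ) (i j : Fin n),
      fderiv ℝ (fun x' => G j (x', y)) x (Pi.single i 1)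
        = fderiv ℝ (G j) (x, y) (Pi.single i 1, 0) := by
    intro x y i j
    have h : HasFDerivAt (fun x' => G j (x', y))
        ((fderiv ℝ (G j) (x, y)).comp ((ContinuousLinearMap.id ℝ (Fin n → ℝ)).prod 0)) x :=
      by have := (((hGc j).differentiable one_ne_zero) (x, y)).hasFDerivAt.comp x (hmkl y x); exact this
    rw [h.fderiv]
    simp
  have hv2' : ∀ (x y : Fin n → ℝ) (i j : Fin n),
      fderiv ℝ (fun y' => Gr j (x, y')) y (Pi.single i 1)
        = fderiv ℝ (Gr j) (x, y) (0, Pi.single i 1) := by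
    intro x y i j
    have h : HasFDerivAt (fun y' => Gr j (x, y'))
        ((fderiv ℝ (Gr j) (x, y)).comp
          ((0 : (Fin n → ℝ) →L[ℝ] (Fin n → ℝ)).prod (ContinuousLinearMap.id ℝ (Fin n → ℝ)))) y :=
      (((hGrc j).differentiable one_ne_zero) (x, y)).hasFDerivAt.comp y (hmkr x y)
    rw [h.fderiv]
    simp
  have hvec1 : ∀ (x y : Fin n → ℝ), gradVec (fun x' => f x' y) x = fun j => G j (x, y) := by
    intro x y
    funext j
    simp only [gradVec]
    exact hslice1 x y j
  have hvec2 : ∀ (x y : Fin n → ℝ), gradVec (f x) y = fun j => Gr j (x, y) := by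
    intro x y
    funext j
    simp only [gradVec]
    exact hslice2 x y j
  have hUc : Continuous U := hU.continuous
  have hπcont : Continuous (fun p : (Fin n → ℝ) × (Fin n → ℝ) => jointDensity τ₁ τ₂ U p.1 p.2) := by
    simp only [jointDensity]
    exact Real.continuous_exp.comp (((hUc.comp continuous_fst).neg.div_const τ₁).sub
      ((hUc.comp continuous_snd).div_const τ₂))
  have hUg : ∀ i : Fin n, Continuous fun z : Fin n → ℝ => fderiv ℝ U z (Pi.single i 1) :=
    fun i => (hU.continuous_fderiv one_ne_zero).clm_apply continuous_const
  set P : ((Fin n → ℝ) × (Fin n → ℝ)) → ℝ := fun p =>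
    (-(L.mulVec (gradVec U p.1) ⬝ᵥ fun j => G j p)
      + τ₁ * ∑ i, ∑ j, L i j * fderiv ℝ (G j) p (Pi.single i 1, 0))
      * jointDensity τ₁ τ₂ U p.1 p.2 with hPdef
  set Q : ((Fin n → ℝ) × (Fin n → ℝ)) → ℝ := fun p =>
    (-(L.mulVec (gradVec U p.2) ⬝ᵥ fun j => Gr j p)
      + τ₂ * ∑ i, ∑ j, L i j * fderiv ℝ (Gr j) p (0, Pi.single i 1))
      * jointDensity τ₁ τ₂ U p.1 p.2 with hQdef
  set S : ((Fin n → ℝ) × (Fin n → ℝ)) → ℝ := fun p =>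
    c * swapS τ₁ τ₂ U p.1 p.2 * (f p.2 p.1 - f p.1 p.2)
      * jointDensity τ₁ τ₂ U p.1 p.2 with hSdef
  have hdecomp : ∀ x y, repGen L τ₁ τ₂ c U f x y * jointDensity τ₁ τ₂ U x y
      = P (x, y) + Q (x, y) + S (x, y) := by
    intro x y
    simp only [hPdef, hQdef, hSdef, repGen, gradVec, hslice1, hslice2, hv1', hv2', hvec1, hvec2]
    ring
  -- vanishing of derivative atoms off the support of `fderiv F`
  have hKc : IsCompact (tsupport (fderiv ℝ F)) := hFs.fderiv ℝ
  have hG0 : ∀ p ∉ tsupport (fderiv ℝ F), ∀ j : Fin n, G j p = 0 := by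
    intro p hp j
    simp [hGdef, image_eq_zero_of_notMem_tsupport hp]
  have hGr0 : ∀ p ∉ tsupport (fderiv ℝ F), ∀ j : Fin n, Gr j p = 0 := by
    intro p hp j
    simp [hGrdef, image_eq_zero_of_notMem_tsupport hp]
  have hGd0 : ∀ p ∉ tsupport (fderiv ℝ F), ∀ j : Fin n, fderiv ℝ (G j) p = 0 := by
    intro p hp j
    have hev : G j =ᶠ[nhds p] (fun _ => (0:ℝ)) := by
      filter_upwards [(isClosed_tsupport (fderiv ℝ F)).isOpen_compl.mem_nhds hp] with q hq
      simp [hGdef, image_eq_zero_of_notMem_tsupport hq]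
    rw [hev.fderiv_eq]
    exact fderiv_const_apply 0
  have hGrd0 : ∀ p ∉ tsupport (fderiv ℝ F), ∀ j : Fin n, fderiv ℝ (Gr j) p = 0 := by
    intro p hp j
    have hev : Gr j =ᶠ[nhds p] (fun _ => (0:ℝ)) := by
      filter_upwards [(isClosed_tsupport (fderiv ℝ F)).isOpen_compl.mem_nhds hp] with q hq
      simp [hGrdef, image_eq_zero_of_notMem_tsupport hq]
    rw [hev.fderiv_eq]
    exact fderiv_const_apply 0
  -- compact support of P, Q, S
  have hPsupp : HasCompactSupport P := by
    apply HasCompactSupport.intro hKc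
    intro p hp
    have h1 : (fun j => G j p) = (0 : Fin n → ℝ) := funext fun j => hG0 p hp j
    have h2 : ∀ i j : Fin n, fderiv ℝ (G j) p (Pi.single i 1, 0) = 0 := fun i j => by
      rw [hGd0 p hp j]; rfl
    simp [hPdef, h1, h2]
  have hQsupp : HasCompactSupport Q := by
    apply HasCompactSupport.intro hKc
    intro p hp
    have h1 : (fun j => Gr j p) = (0 : Fin n → ℝ) := funext fun j => hGr0 p hp j
    have h2 : ∀ i j : Fin n, fderiv ℝ (Gr j) p (0, Pi.single i 1) = 0 := fun i j => by
      rw [hGrd0 p hp j]; rfl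
    simp [hQdef, h1, h2]
  have hSsupp : HasCompactSupport S := by
    apply HasCompactSupport.intro (hFs.union (hFs.image continuous_swap))
    intro p hp
    simp only [Set.mem_union, not_or] at hp
    have h1 : F p = 0 := image_eq_zero_of_notMem_tsupport hp.1
    have h2 : F (p.2, p.1) = 0 := by
      by_contra h
      exact hp.2 ⟨(p.2, p.1), subset_tsupport _ h, rfl⟩
    have h1' : f p.1 p.2 = 0 := h1
    have h2' : f p.2 p.1 = 0 := h2
    simp [hSdef, h1', h2']
  -- continuity of P, Q, S
  have hPcont : Continuous P := by
    rw [hPdef]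
    refine Continuous.mul (Continuous.add ?_ (continuous_const.mul ?_)) hπcont
    · refine Continuous.neg ?_
      simp only [Matrix.mulVec, dotProduct, gradVec]
      refine continuous_finset_sum _ fun j _ => Continuous.mul
        (continuous_finset_sum _ fun i _ => continuous_const.mul ?_) ((hGc j).continuous)
      exact (hUg i).comp continuous_fst
    · refine continuous_finset_sum _ fun i _ => continuous_finset_sum _ fun j _ =>
        continuous_const.mul ?_
      exact ((hGc j).continuous_fderiv one_ne_zero).clm_apply continuous_const
  have hQcont : Continuous Q := by
    rw [hQdef]
    refine Continuous.mul (Continuous.add ?_ (continuous_const.mul ?_)) hπcont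
    · refine Continuous.neg ?_
      simp only [Matrix.mulVec, dotProduct, gradVec]
      refine continuous_finset_sum _ fun j _ => Continuous.mul
        (continuous_finset_sum _ fun i _ => continuous_const.mul ?_) ((hGrc j).continuous)
      exact (hUg i).comp continuous_snd
    · refine continuous_finset_sum _ fun i _ => continuous_finset_sum _ fun j _ =>
        continuous_const.mul ?_
      exact ((hGrc j).continuous_fderiv one_ne_zero).clm_apply continuous_const
  have hFcont : Continuous F := hF2.continuous
  have hswapcont : Continuous (fun p : (Fin n → ℝ) × (Fin n → ℝ) => swapS τ₁ τ₂ U p.1 p.2) := by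
    simp only [swapS]
    exact continuous_const.min (Real.continuous_exp.comp (continuous_const.mul
      ((hUc.comp continuous_fst).sub (hUc.comp continuous_snd))))
  have hScont : Continuous S := by
    rw [hSdef]
    exact ((continuous_const.mul hswapcont).mul
      ((hFcont.comp (continuous_snd.prodMk continuous_fst)).sub
        (hFcont.comp (continuous_fst.prodMk continuous_snd)))).mul hπcont
  -- integrability on the product space
  have hPint : Integrable P (volume : Measure ((Fin n → ℝ) × (Fin n → ℝ))) :=
    hPcont.integrable_of_hasCompactSupport hPsupp
  have hQint : Integrable Q (volume : Measure ((Fin n → ℝ) × (Fin n → ℝ))) :=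
    hQcont.integrable_of_hasCompactSupport hQsupp
  have hSint : Integrable S (volume : Measure ((Fin n → ℝ) × (Fin n → ℝ))) :=
    hScont.integrable_of_hasCompactSupport hSsupp
  -- slice compact supports
  have slice_right : ∀ (T : ((Fin n → ℝ) × (Fin n → ℝ)) → ℝ), HasCompactSupport T →
      ∀ x, HasCompactSupport (fun y => T (x, y)) := by
    intro T hT x
    apply HasCompactSupport.intro (hT.image continuous_snd)
    intro y hy
    by_contra h
    exact hy ⟨(x, y), subset_tsupport _ h, rfl⟩
  have slice_left : ∀ (T : ((Fin n → ℝ) × (Fin n → ℝ)) → ℝ), HasCompactSupport T →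
      ∀ y, HasCompactSupport (fun x => T (x, y)) := by
    intro T hT y
    apply HasCompactSupport.intro (hT.image continuous_fst)
    intro x hx
    by_contra h
    exact hx ⟨(x, y), subset_tsupport _ h, rfl⟩
  -- joint density factorizations
  have hjd1 : ∀ x y : Fin n → ℝ, jointDensity τ₁ τ₂ U x y
      = Real.exp (-U x / τ₁) * Real.exp (-U y / τ₂) := by
    intro x y
    rw [jointDensity, ← Real.exp_add]
    congr 1
    ring
  have hjd2 : ∀ x y : Fin n → ℝ, jointDensity τ₁ τ₂ U x y
      = Real.exp (-U y / τ₂) * Real.exp (-U x / τ₁) := by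
    intro x y
    rw [jointDensity, ← Real.exp_add]
    congr 1
    ring
  -- the two Langevin parts integrate to zero in their own variable
  have key_y : ∀ x : Fin n → ℝ, (∫ y : Fin n → ℝ, Q (x, y)) = 0 := by
    intro x
    have hφ : ContDiff ℝ 2 (f x) := hF2.comp (contDiff_const.prodMk contDiff_id)
    have hφc : HasCompactSupport (f x) := slice_right F hFs x
    have h := langevin_part τ₂ (Real.exp (-U x / τ₁)) hτ₂ L hL U hU (f x) hφ hφc
    rw [← h]
    congr 1
    funext y
    simp only [hQdef, gradVec, hslice2, hv2', hvec2, hjd2 x y]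
  have key_x : ∀ y : Fin n → ℝ, (∫ x : Fin n → ℝ, P (x, y)) = 0 := by
    intro y
    have hφ : ContDiff ℝ 2 (fun x' => f x' y) := hF2.comp (contDiff_id.prodMk contDiff_const)
    have hφc : HasCompactSupport (fun x' => f x' y) := slice_left F hFs y
    have h := langevin_part τ₁ (Real.exp (-U y / τ₂)) hτ₁ L hL U hU _ hφ hφc
    rw [← h]
    congr 1
    funext x
    simp only [hPdef, gradVec, hslice1, hv1', hvec1, hjd1 x y]
  -- detailed balance for the swap part
  have hswap_pi : ∀ x y : Fin n → ℝ, swapS τ₁ τ₂ U x y * jointDensity τ₁ τ₂ U x y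
      = min (jointDensity τ₁ τ₂ U x y) (jointDensity τ₁ τ₂ U y x) := by
    intro x y
    have hpos : (0:ℝ) ≤ jointDensity τ₁ τ₂ U x y := le_of_lt (Real.exp_pos _)
    rw [swapS, min_mul_of_nonneg _ _ hpos, one_mul]
    congr 1
    rw [jointDensity, jointDensity, ← Real.exp_add]
    congr 1
    ring
  have hdb : ∀ x y : Fin n → ℝ, S (y, x) = - S (x, y) := by
    intro x y
    simp only [hSdef]
    have hmin : swapS τ₁ τ₂ U y x * jointDensity τ₁ τ₂ U y x
        = swapS τ₁ τ₂ U x y * jointDensity τ₁ τ₂ U x y := by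
      rw [hswap_pi x y, hswap_pi y x, min_comm]
    linear_combination (c * (f x y - f y x)) * hmin
  -- split the inner integral
  have hsplit : ∀ x : Fin n → ℝ,
      (∫ y : Fin n → ℝ, repGen L τ₁ τ₂ c U f x y * jointDensity τ₁ τ₂ U x y)
        = (∫ y : Fin n → ℝ, P (x, y)) + ∫ y : Fin n → ℝ, S (x, y) := by
    intro x
    have hiP : Integrable (fun y => P (x, y)) (volume : Measure (Fin n → ℝ)) :=
      (hPcont.comp (Continuous.prodMk_right x)).integrable_of_hasCompactSupport
        (slice_right P hPsupp x)
    have hiQ : Integrable (fun y => Q (x, y)) (volume : Measure (Fin n → ℝ)) :=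
      (hQcont.comp (Continuous.prodMk_right x)).integrable_of_hasCompactSupport
        (slice_right Q hQsupp x)
    have hiS : Integrable (fun y => S (x, y)) (volume : Measure (Fin n → ℝ)) :=
      (hScont.comp (Continuous.prodMk_right x)).integrable_of_hasCompactSupport
        (slice_right S hSsupp x)
    rw [show (fun y => repGen L τ₁ τ₂ c U f x y * jointDensity τ₁ τ₂ U x y)
        = fun y => P (x, y) + Q (x, y) + S (x, y) from funext fun y => hdecomp x y]
    have hiPQ : Integrable (fun y => P (x, y) + Q (x, y)) (volume : Measure (Fin n → ℝ)) :=
      hiP.add hiQ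
    rw [integral_add hiPQ hiS, integral_add hiP hiQ, key_y x, add_zero]
  -- assemble
  have hPint' : Integrable (Function.uncurry fun x y => P (x, y))
      ((volume : Measure (Fin n → ℝ)).prod (volume : Measure (Fin n → ℝ))) := by
    exact hPint
  have hSint' : Integrable (Function.uncurry fun x y => S (x, y))
      ((volume : Measure (Fin n → ℝ)).prod (volume : Measure (Fin n → ℝ))) := by
    exact hSint
  have hP0 : (∫ x : Fin n → ℝ, ∫ y : Fin n → ℝ, P (x, y)) = 0 := by
    rw [integral_integral_swap hPint']
    simp only [key_x]
    simp
  have hS0 : (∫ x : Fin n → ℝ, ∫ y : Fin n → ℝ, S (x, y)) = 0 := by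
    rw [MeasureTheory.integral_integral hSint']
    have hself : (∫ z : (Fin n → ℝ) × (Fin n → ℝ), S (z.1, z.2)
          ∂((volume : Measure (Fin n → ℝ)).prod volume))
        = - ∫ z : (Fin n → ℝ) × (Fin n → ℝ), S (z.1, z.2)
          ∂((volume : Measure (Fin n → ℝ)).prod volume) := by
      calc (∫ z : (Fin n → ℝ) × (Fin n → ℝ), S (z.1, z.2)
            ∂((volume : Measure (Fin n → ℝ)).prod volume))
          = ∫ z : (Fin n → ℝ) × (Fin n → ℝ), S (z.swap.1, z.swap.2)
            ∂((volume : Measure (Fin n → ℝ)).prod volume) :=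
            (integral_prod_swap (fun z : (Fin n → ℝ) × (Fin n → ℝ) => S (z.1, z.2))).symm
        _ = ∫ z : (Fin n → ℝ) × (Fin n → ℝ), - S (z.1, z.2)
            ∂((volume : Measure (Fin n → ℝ)).prod volume) := by
            congr 1
            funext z
            exact hdb z.1 z.2
        _ = - ∫ z : (Fin n → ℝ) × (Fin n → ℝ), S (z.1, z.2)
            ∂((volume : Measure (Fin n → ℝ)).prod volume) := integral_neg _
    linarith
  calc (∫ x : Fin n → ℝ, ∫ y : Fin n → ℝ,
        repGen L τ₁ τ₂ c U f x y * jointDensity τ₁ τ₂ U x y)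
      = ∫ x : Fin n → ℝ, ((∫ y : Fin n → ℝ, P (x, y)) + ∫ y : Fin n → ℝ, S (x, y)) := by
        congr 1
        funext x
        exact hsplit x
    _ = (∫ x : Fin n → ℝ, ∫ y : Fin n → ℝ, P (x, y))
          + ∫ x : Fin n → ℝ, ∫ y : Fin n → ℝ, S (x, y) :=
        integral_add hPint'.integral_prod_left hSint'.integral_prod_left
    _ = 0 := by rw [hP0, hS0, add_zero]
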